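/- For the 2n-color case (a = 2, b = 0), the total count W_ν = Σ_{k=1}^{ν} 2^k C(ν+k-1, ν-k) satisfies W_1 = 2, W_2 = 8, and W_ν = 4 W_{ν-1} - W_{ν-2} for ν > 2. -/

import Mathlib

open Finset

private lemma pascal2 (m r : ℕ) :
    (m+2).choose (r+2) + m.choose r
      = 2 * (m+1).choose (r+1) + m.choose (r+2) := by
  simp [Nat.choose_succ_succ]
  ring

private def gAux (ν : ℕ) : ℕ :=
  ∑ k ∈ Finset.Icc 1 ν, 2 ^ k * Nat.choose (ν + k - 1) (ν - k)

private lemma gAux_range (ν : ℕ) :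
    gAux ν = ∑ i ∈ Finset.range ν, 2 ^ (i + 1) * Nat.choose (ν + i) (ν - 1 - i) := by
  rw [gAux, ← Finset.Ico_add_one_right_eq_Icc, Finset.sum_Ico_eq_sum_range, Nat.add_sub_cancel]
  refine Finset.sum_congr rfl fun i hi => ?_
  have h1 : 1 + i = i + 1 := by omega
  rw [h1]
  have h2 : ν + (i + 1) - 1 = ν + i := by omega
  have h3 : ν - (i + 1) = ν - 1 - i := by omega
  rw [h2, h3]

private lemma gAux_rec (n : ℕ) : gAux (n+3) + gAux (n+1) = 4 * gAux (n+2) := by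
  rw [gAux_range, gAux_range, gAux_range]
  have e3 : ∀ i, n + 3 - 1 - i = n + 2 - i := fun i => by omega
  have e2 : ∀ i, n + 2 - 1 - i = n + 1 - i := fun i => by omega
  have e1 : ∀ i, n + 1 - 1 - i = n - i := fun i => by omega
  simp only [e1, e2, e3]
  set P : ℕ := ∑ i ∈ Finset.range n, 2 ^ (i+1) * Nat.choose (n+2+i) (n+1-i) with hP
  set Q : ℕ := ∑ i ∈ Finset.range (n+1), 2 ^ (i+1) * Nat.choose (n+2+i) (n+1-i) with hQdef
  set R3 : ℕ := ∑ i ∈ Finset.range (n+1), 2 ^ (i+1) * Nat.choose (n+3+i) (n+2-i) with hR3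
  set R1 : ℕ := ∑ i ∈ Finset.range (n+1), 2 ^ (i+1) * Nat.choose (n+1+i) (n-i) with hR1
  have hT3 : ∑ i ∈ Finset.range (n+3), 2 ^ (i+1) * Nat.choose (n+3+i) (n+2-i)
      = R3 + (4*(2^(n+1)*n) + 8*2^(n+1)) + 4*2^(n+1) := by
    rw [Finset.sum_range_succ, Finset.sum_range_succ, ← hR3]
    have b1 : n + 2 - (n+2) = 0 := by omega
    have b2 : n + 2 - (n+1) = 1 := by omega
    rw [b1, b2, Nat.choose_zero_right, Nat.choose_one_right]
    have b3 : n + 3 + (n+1) = 2*n+4 := by omega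
    rw [b3]
    ring
  have hT2 : ∑ i ∈ Finset.range (n+2), 2 ^ (i+1) * Nat.choose (n+2+i) (n+1-i)
      = Q + 2*2^(n+1) := by
    rw [Finset.sum_range_succ, ← hQdef]
    have b3 : n + 1 - (n+1) = 0 := by omega
    rw [b3, Nat.choose_zero_right]
    ring
  have hQ : Q = P + (2*(2^(n+1)*n) + 2*2^(n+1)) := by
    rw [hQdef, Finset.sum_range_succ, ← hP]
    have b4 : n + 1 - n = 1 := by omega
    rw [b4, Nat.choose_one_right]
    have b5 : n + 2 + n = 2*n+2 := by omega
    rw [b5]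
    ring
  have shift : ∑ i ∈ Finset.range (n+1), 2 ^ (i+1) * Nat.choose (n+1+i) (n+2-i)
      = 2 * P := by
    rw [Finset.sum_range_succ']
    have h0 : 2 ^ (0+1) * Nat.choose (n+1+0) (n+2-0) = 0 := by
      rw [Nat.choose_eq_zero_of_lt (by omega)]
      ring
    rw [h0, Nat.add_zero, hP, Finset.mul_sum]
    refine Finset.sum_congr rfl fun i hi => ?_
    have h1 : n + 1 + (i+1) = n + 2 + i := by omega
    have h2 : n + 2 - (i+1) = n + 1 - i := by omega
    rw [h1, h2]
    ring
  have key : R3 + R1 = 2 * Q + 2 * P := by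
    rw [hR3, hR1, ← Finset.sum_add_distrib, ← shift]
    have hcong : ∑ i ∈ Finset.range (n+1),
        (2 ^ (i+1) * Nat.choose (n+3+i) (n+2-i) + 2 ^ (i+1) * Nat.choose (n+1+i) (n-i))
        = ∑ i ∈ Finset.range (n+1),
        (2 * (2 ^ (i+1) * Nat.choose (n+2+i) (n+1-i))
          + 2 ^ (i+1) * Nat.choose (n+1+i) (n+2-i)) := by
      refine Finset.sum_congr rfl fun i hi => ?_
      have hi' : i ≤ n := Nat.lt_succ_iff.mp (Finset.mem_range.mp hi)
      have h1 : n + 3 + i = (n+1+i) + 2 := by omega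
      have h2 : n + 2 - i = (n - i) + 2 := by omega
      have h3 : n + 2 + i = (n+1+i) + 1 := by omega
      have h4 : n + 1 - i = (n - i) + 1 := by omega
      rw [← Nat.mul_add, h1, h2, h3, h4, pascal2]
      ring
    rw [hcong, Finset.sum_add_distrib, ← Finset.mul_sum, ← hQdef]
  rw [hT3, hT2]
  linarith [key, hQ]

theorem twoN_color_recurrence
    (W : ℕ → ℤ)
    (hW : ∀ ν, W ν = ∑ k ∈ Finset.Icc 1 ν,
      (2 : ℤ) ^ k * Nat.choose (ν + k - 1) (ν - k)) :
    W 1 = 2 ∧ W 2 = 8 ∧ ∀ ν, 2 < ν → W ν = 4 * W (ν - 1) - W (ν - 2) := by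
  have hWg : ∀ ν, W ν = (gAux ν : ℤ) := by
    intro ν
    rw [hW, gAux]
    push_cast
    rfl
  refine ⟨?_, ?_, ?_⟩
  · rw [hWg]; simp [gAux, show Finset.Icc 1 1 = {1} from rfl]
  · rw [hWg]; norm_num [gAux, show Finset.Icc 1 2 = {1, 2} from rfl]
  · intro ν hν
    obtain ⟨n, rfl⟩ : ∃ n, ν = n + 3 := ⟨ν - 3, by omega⟩
    have h1 : n + 3 - 1 = n + 2 := by omega
    have h2 : n + 3 - 2 = n + 1 := by omega
    rw [h1, h2, hWg, hWg, hWg]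
    have := gAux_rec n
    omega
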